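/- For every positive integer n, the number of subgroups of ℤ × ℤ of index n equals σ₁(n), the sum of the divisors of n. -/

import Mathlib

/-- The subgroup of `ℤ × ℤ` generated by `(a, b)` and `(0, d)`. -/
def Hsub (a b d : ℤ) : AddSubgroup (ℤ × ℤ) :=
  (AddMonoidHom.mk' (fun p : ℤ × ℤ => (p.1 * a, p.1 * b + p.2 * d))
    (by intro p q; simp [Prod.ext_iff]; constructor <;> ring)).range

theorem mem_Hsub {a b d : ℤ} {z : ℤ × ℤ} :
    z ∈ Hsub a b d ↔ ∃ s : ℤ, z.1 = s * a ∧ d ∣ z.2 - s * b := by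
  constructor
  · rintro ⟨p, rfl⟩
    exact ⟨p.1, rfl, ⟨p.2, by simp [AddMonoidHom.mk'_apply]; ring⟩⟩
  · rintro ⟨s, h1, t, ht⟩
    exact ⟨(s, t), by simp [AddMonoidHom.mk'_apply, Prod.ext_iff, h1.symm]; linarith [mul_comm d t]⟩

theorem index_ker_of_surj {G M : Type*} [AddGroup G] [AddGroup M] {f : G →+ M}
    (hf : Function.Surjective f) : f.ker.index = Nat.card M := by
  rw [AddSubgroup.index_ker, AddMonoidHom.range_eq_top.2 hf]
  exact Nat.card_congr AddSubgroup.topEquiv.toEquiv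

theorem Hsub_index (a d : ℕ) (ha : 0 < a) (hd : 0 < d) (b : ℤ) :
    (Hsub a b d).index = a * d := by
  set g1 : (ℤ × ℤ) →+ ZMod a := (Int.castAddHom _).comp (AddMonoidHom.fst ℤ ℤ) with hg1def
  have hg1mem : ∀ z : ℤ × ℤ, z ∈ g1.ker ↔ (a : ℤ) ∣ z.1 := by
    intro z
    simp [hg1def, AddMonoidHom.mem_ker, ZMod.intCast_zmod_eq_zero_iff_dvd]
  have hle : Hsub a b d ≤ g1.ker := by
    intro z hz
    rw [mem_Hsub] at hz
    obtain ⟨s, h1, -⟩ := hz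
    rw [hg1mem]
    exact ⟨s, by rw [h1]; ring⟩
  have hg1surj : Function.Surjective g1 := by
    intro z
    obtain ⟨x, rfl⟩ := ZMod.intCast_surjective z
    exact ⟨(x, 0), rfl⟩
  have hKi : g1.ker.index = a := by rw [index_ker_of_surj hg1surj, Nat.card_zmod]
  -- the equivalence ℤ × ℤ ≃+ ker g1
  have hane : (a : ℤ) ≠ 0 := Int.natCast_ne_zero.2 ha.ne'
  let e : (ℤ × ℤ) ≃+ g1.ker :=
    { toFun := fun p => ⟨(p.1 * a, p.2), (hg1mem _).2 ⟨p.1, mul_comm _ _⟩⟩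
      invFun := fun z => (z.1.1 / a, z.1.2)
      left_inv := by
        rintro ⟨s, y⟩
        simp [Int.mul_ediv_cancel _ hane]
      right_inv := by
        rintro ⟨⟨x, y⟩, hz⟩
        rw [hg1mem] at hz
        exact Subtype.ext (by simp [Int.ediv_mul_cancel hz])
      map_add' := by
        rintro ⟨s, y⟩ ⟨s', y'⟩
        exact Subtype.ext (by simp [Prod.ext_iff]; ring) }
  set h2 : (ℤ × ℤ) →+ ZMod d := AddMonoidHom.mk'
      (fun p : ℤ × ℤ => ((p.2 - p.1 * b : ℤ) : ZMod d))
      (by intro p q; simp only [Prod.fst_add, Prod.snd_add]; push_cast; ring) with hh2def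
  have hcomap : AddSubgroup.comap e.toAddMonoidHom ((Hsub a b d).addSubgroupOf g1.ker)
      = h2.ker := by
    ext ⟨s, y⟩
    simp only [AddSubgroup.mem_comap, AddSubgroup.mem_addSubgroupOf,
      AddMonoidHom.mem_ker, hh2def, AddMonoidHom.mk'_apply]
    rw [ZMod.intCast_zmod_eq_zero_iff_dvd]
    change (((s * a : ℤ), y) ∈ Hsub a b d) ↔ _
    rw [mem_Hsub]
    constructor
    · rintro ⟨s', hs', hdvd⟩
      have : s' = s := by
        have := mul_right_cancel₀ hane hs'.symm
        omega
      simpa [this] using hdvd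
    · intro hdvd
      exact ⟨s, rfl, hdvd⟩
  have hh2surj : Function.Surjective h2 := by
    intro z
    obtain ⟨y, rfl⟩ := ZMod.intCast_surjective z
    exact ⟨(0, y), by simp [hh2def]⟩
  have hrel : (Hsub a b d).relIndex g1.ker = d := by
    have h1 : ((Hsub a b d).addSubgroupOf g1.ker).index
        = (AddSubgroup.comap e.toAddMonoidHom ((Hsub a b d).addSubgroupOf g1.ker)).index := by
      rw [AddSubgroup.index_comap, AddMonoidHom.range_eq_top.2 e.surjective,
        AddSubgroup.relIndex_top_right]
    rw [AddSubgroup.relIndex, h1, hcomap, index_ker_of_surj hh2surj, Nat.card_zmod]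
  rw [← AddSubgroup.relIndex_mul_index hle, hrel, hKi, mul_comm]

theorem Hsub_neg_left (a b d : ℤ) : Hsub (-a) b d = Hsub a (-b) d := by
  ext z
  simp only [mem_Hsub]
  constructor
  · rintro ⟨s, h1, h2⟩
    refine ⟨-s, by rw [h1]; ring, ?_⟩
    rw [show z.2 - -s * -b = z.2 - s * b from by ring]
    exact h2
  · rintro ⟨s, h1, h2⟩
    refine ⟨-s, by rw [h1]; ring, ?_⟩
    rw [show z.2 - -s * b = z.2 - s * -b from by ring]
    exact h2

theorem Hsub_neg_right (a b d : ℤ) : Hsub a b (-d) = Hsub a b d := by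
  ext z
  simp only [mem_Hsub, neg_dvd]

theorem Hsub_mod (a b d : ℤ) : Hsub a (b % d) d = Hsub a b d := by
  have hdvd : d ∣ b - b % d := Int.dvd_self_sub_of_emod_eq rfl
  ext z
  simp only [mem_Hsub]
  constructor
  · rintro ⟨s, h1, h2⟩
    refine ⟨s, h1, ?_⟩
    have : z.2 - s * b = (z.2 - s * (b % d)) - s * (b - b % d) := by ring
    rw [this]
    exact dvd_sub h2 (Dvd.dvd.mul_left hdvd s)
  · rintro ⟨s, h1, h2⟩
    refine ⟨s, h1, ?_⟩
    have : z.2 - s * (b % d) = (z.2 - s * b) + s * (b - b % d) := by ring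
    rw [this]
    exact dvd_add h2 (Dvd.dvd.mul_left hdvd s)

theorem snd_mem_Hsub {a b d y : ℤ} (ha : a ≠ 0) :
    (0, y) ∈ Hsub a b d ↔ d ∣ y := by
  rw [mem_Hsub]
  constructor
  · rintro ⟨s, h1, h2⟩
    have hs : s = 0 := by
      rcases mul_eq_zero.1 h1.symm with h | h
      · exact h
      · exact absurd h ha
    simpa [hs] using h2
  · intro h
    exact ⟨0, by simp, by simpa using h⟩

theorem fst_mem_Hsub {a b d x : ℤ} :
    (∃ y, (x, y) ∈ Hsub a b d) ↔ a ∣ x := by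
  constructor
  · rintro ⟨y, hy⟩
    rw [mem_Hsub] at hy
    obtain ⟨s, h1, -⟩ := hy
    exact ⟨s, by linarith [mul_comm s a]⟩
  · rintro ⟨s, rfl⟩
    exact ⟨s * b, mem_Hsub.2 ⟨s, by ring, by simp⟩⟩

theorem diag_mem_Hsub {a b d y : ℤ} (ha : a ≠ 0) :
    (a, y) ∈ Hsub a b d ↔ d ∣ y - b := by
  rw [mem_Hsub]
  constructor
  · rintro ⟨s, h1, h2⟩
    have hs : s = 1 := by
      have : (s - 1) * a = 0 := by linarith
      rcases mul_eq_zero.1 this with h | h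
      · omega
      · exact absurd h ha
    simpa [hs] using h2
  · intro h
    exact ⟨1, by ring, by simpa using h⟩

theorem Hsub_inj {a a' d d' : ℕ} {b b' : ℤ} (ha : 0 < a) (ha' : 0 < a')
    (hd : 0 < d) (hd' : 0 < d') (hb0 : 0 ≤ b) (hb : b < d) (hb0' : 0 ≤ b') (hb' : b' < d')
    (h : Hsub a b d = Hsub a' b' d') : a = a' ∧ d = d' ∧ b = b' := by
  have hane : (a : ℤ) ≠ 0 := Int.natCast_ne_zero.2 ha.ne'
  have hane' : (a' : ℤ) ≠ 0 := Int.natCast_ne_zero.2 ha'.ne'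
  have haa : a = a' := by
    have h1 : (a : ℤ) ∣ a' := by
      rw [← @fst_mem_Hsub a b d a', h]
      exact fst_mem_Hsub.2 dvd_rfl
    have h2 : (a' : ℤ) ∣ a := by
      rw [← @fst_mem_Hsub a' b' d' a, ← h]
      exact fst_mem_Hsub.2 dvd_rfl
    exact_mod_cast Int.dvd_antisymm (by positivity) (by positivity) h1 h2
  have hdd : d = d' := by
    have h1 : (d : ℤ) ∣ d' := by
      rw [← snd_mem_Hsub hane, h, snd_mem_Hsub hane']
    have h2 : (d' : ℤ) ∣ d := by
      rw [← snd_mem_Hsub hane', ← h, snd_mem_Hsub hane]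
    exact_mod_cast Int.dvd_antisymm (by positivity) (by positivity) h1 h2
  refine ⟨haa, hdd, ?_⟩
  have hmem : ((a : ℤ), b') ∈ Hsub a b d := by
    rw [h]
    have : ((a' : ℤ), b') ∈ Hsub a' b' d' := (diag_mem_Hsub hane').2 (by simp)
    rwa [haa]
  have hdvd : (d : ℤ) ∣ b' - b := (diag_mem_Hsub hane).1 hmem
  obtain ⟨k, hk⟩ := hdvd
  subst hdd
  have : b' - b = 0 := by
    rcases lt_trichotomy k 0 with h' | h' | h'
    · nlinarith
    · simp [h'] at hk; omega
    · nlinarith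
  omega

theorem Hsub_classify {n : ℕ} (hn : 0 < n) (H : AddSubgroup (ℤ × ℤ)) (hH : H.index = n) :
    ∃ (a d : ℕ) (b : ℤ), 0 < a ∧ 0 < d ∧ 0 ≤ b ∧ b < d ∧ a * d = n ∧
      H = Hsub a b d := by
  haveI hfin : Finite ((ℤ × ℤ) ⧸ H) := by
    apply Nat.finite_of_card_ne_zero
    rw [← AddSubgroup.index_eq_card, hH]
    omega
  -- second-coordinate subgroup
  obtain ⟨dz, hdz⟩ := Int.subgroup_cyclic (H.comap (AddMonoidHom.inr ℤ ℤ))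
  have hdmem : ∀ y : ℤ, (0, y) ∈ H ↔ dz ∣ y := by
    intro y
    have : ((0 : ℤ), y) ∈ H ↔ y ∈ H.comap (AddMonoidHom.inr ℤ ℤ) := by
      simp [AddSubgroup.mem_comap]
    rw [this, hdz, AddSubgroup.mem_closure_singleton]
    constructor
    · rintro ⟨k, rfl⟩; exact ⟨k, by simp [zsmul_eq_mul, mul_comm]⟩
    · rintro ⟨k, rfl⟩; exact ⟨k, by simp [zsmul_eq_mul, mul_comm]⟩
  -- first-coordinate subgroup
  obtain ⟨az, haz⟩ := Int.subgroup_cyclic (H.map (AddMonoidHom.fst ℤ ℤ))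
  have hamem : ∀ x : ℤ, (∃ y, (x, y) ∈ H) ↔ az ∣ x := by
    intro x
    have : (∃ y, (x, y) ∈ H) ↔ x ∈ H.map (AddMonoidHom.fst ℤ ℤ) := by
      rw [AddSubgroup.mem_map]
      constructor
      · rintro ⟨y, hy⟩; exact ⟨(x, y), hy, rfl⟩
      · rintro ⟨⟨x', y⟩, hy, rfl⟩; exact ⟨y, hy⟩
    rw [this, haz, AddSubgroup.mem_closure_singleton]
    constructor
    · rintro ⟨k, rfl⟩; exact ⟨k, by simp [zsmul_eq_mul, mul_comm]⟩
    · rintro ⟨k, rfl⟩; exact ⟨k, by simp [zsmul_eq_mul, mul_comm]⟩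
  have hdz0 : dz ≠ 0 := by
    rintro rfl
    have hinj : Function.Injective
        (fun y : ℤ => (QuotientAddGroup.mk ((0, y) : ℤ × ℤ) : (ℤ × ℤ) ⧸ H)) := by
      intro y y' hyy
      have h1 : ((0 : ℤ), y' - y) ∈ H := by
        have := QuotientAddGroup.eq.1 hyy
        simpa [Prod.ext_iff, sub_eq_neg_add] using this
      have h2 := (hdmem _).1 h1
      have : y' - y = 0 := by simpa using h2
      omega
    haveI := Finite.of_injective _ hinj
    exact not_finite ℤ
  have haz0 : az ≠ 0 := by
    rintro rfl
    have hinj : Function.Injective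
        (fun x : ℤ => (QuotientAddGroup.mk ((x, 0) : ℤ × ℤ) : (ℤ × ℤ) ⧸ H)) := by
      intro x x' hxx
      have h1 : ((x' - x : ℤ), (0 : ℤ)) ∈ H := by
        have := QuotientAddGroup.eq.1 hxx
        simpa [Prod.ext_iff, sub_eq_neg_add] using this
      have h2 := (hamem (x' - x)).1 ⟨0, h1⟩
      have : x' - x = 0 := by simpa using h2
      omega
    haveI := Finite.of_injective _ hinj
    exact not_finite ℤ
  -- pick b0 with (az, b0) ∈ H
  obtain ⟨b0, hb0⟩ := (hamem az).2 dvd_rfl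
  -- H = Hsub az b0 dz
  have hkey : H = Hsub az b0 dz := by
    ext ⟨x, y⟩
    rw [mem_Hsub]
    constructor
    · intro hz
      obtain ⟨s, rfl⟩ := (hamem x).1 ⟨y, hz⟩
      have hsub : ((0 : ℤ), y - s * b0) ∈ H := by
        have hsm : ((s * az, s * b0) : ℤ × ℤ) ∈ H := by
          have := AddSubgroup.zsmul_mem H hb0 s
          simpa [Prod.ext_iff, smul_eq_mul] using this
        have hmem := AddSubgroup.sub_mem H hz hsm
        have hxy : ((az * s, y) : ℤ × ℤ) - (s * az, s * b0) = (0, y - s * b0) := by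
          simp only [Prod.mk_sub_mk, Prod.mk.injEq]
          exact ⟨by ring, trivial⟩
        rwa [hxy] at hmem
      exact ⟨s, by rw [mul_comm], (hdmem _).1 hsub⟩
    · rintro ⟨s, hx, hdvd⟩
      have hsm : ((s * az, s * b0) : ℤ × ℤ) ∈ H := by
        have := AddSubgroup.zsmul_mem H hb0 s
        simpa [Prod.ext_iff, smul_eq_mul] using this
      have hsnd : ((0 : ℤ), y - s * b0) ∈ H := (hdmem _).2 hdvd
      have hmem := AddSubgroup.add_mem H hsm hsnd
      have hxy : ((s * az, s * b0) : ℤ × ℤ) + (0, y - s * b0) = (x, y) := by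
        simp only [Prod.mk_add_mk, Prod.mk.injEq]
        constructor <;> linarith
      rwa [hxy] at hmem
  -- normalize signs
  have habs : H = Hsub |az| (if az < 0 then -b0 else b0) |dz| := by
    rcases le_or_gt 0 az with h1 | h1 <;> rcases le_or_gt 0 dz with h2 | h2
    · rw [if_neg (not_lt.2 h1), abs_of_nonneg h1, abs_of_nonneg h2]; exact hkey
    · rw [if_neg (not_lt.2 h1), abs_of_nonneg h1, abs_of_neg h2, ← Hsub_neg_right]
      simpa using hkey
    · rw [if_pos h1, abs_of_neg h1, abs_of_nonneg h2, ← Hsub_neg_left]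
      simpa using hkey
    · rw [if_pos h1, abs_of_neg h1, abs_of_neg h2, ← Hsub_neg_left, ← Hsub_neg_right]
      simpa using hkey
  set b1 := (if az < 0 then -b0 else b0) with hb1def
  set a : ℕ := az.natAbs with hadef
  set d : ℕ := dz.natAbs with hddef
  have haa : (a : ℤ) = |az| := Int.abs_eq_natAbs az ▸ rfl
  have hdd : (d : ℤ) = |dz| := Int.abs_eq_natAbs dz ▸ rfl
  have hapos : 0 < a := Int.natAbs_pos.2 haz0
  have hdpos : 0 < d := Int.natAbs_pos.2 hdz0
  have hdposz : (0 : ℤ) < d := by exact_mod_cast hdpos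
  refine ⟨a, d, b1 % d, hapos, hdpos, Int.emod_nonneg _ (by omega), Int.emod_lt_of_pos _ hdposz, ?_, ?_⟩
  · have hHeq : H = Hsub a (b1 % d) d := by
      rw [Hsub_mod, haa, hdd]; exact habs
    have := Hsub_index a d hapos hdpos (b1 % d)
    rw [← hHeq, hH] at this
    omega
  · rw [Hsub_mod, haa, hdd]; exact habs

open ArithmeticFunction in
/-- The number of subgroups of `ℤ × ℤ` of index `n` equals `σ₁(n)`. -/
theorem stmt0 (n : ℕ) (hn : 0 < n) :
    Nat.card {H : AddSubgroup (ℤ × ℤ) // H.index = n} = sigma 1 n := by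
  classical
  have hidx : ∀ (a : ℕ), a ∈ n.divisors → ∀ c : Fin (n / a),
      (Hsub a (c.val : ℤ) ((n / a : ℕ) : ℤ)).index = n := by
    intro a ha c
    obtain ⟨hdvd, -⟩ := Nat.mem_divisors.1 ha
    have hapos : 0 < a := Nat.pos_of_mem_divisors ha
    have hdpos : 0 < n / a := Nat.div_pos (Nat.le_of_dvd hn hdvd) hapos
    rw [Hsub_index a (n / a) hapos hdpos]
    exact Nat.mul_div_cancel' hdvd
  let F : (Σ a : {a : ℕ // a ∈ n.divisors}, Fin (n / a)) → {H : AddSubgroup (ℤ × ℤ) // H.index = n} :=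
    fun p => ⟨Hsub p.1.1 (p.2.val : ℤ) ((n / p.1.1 : ℕ) : ℤ), hidx p.1.1 p.1.2 p.2⟩
  have hbij : Function.Bijective F := by
    constructor
    · rintro ⟨⟨a, ha⟩, c⟩ ⟨⟨a', ha'⟩, c'⟩ h
      simp only [F, Subtype.mk.injEq] at h
      have hapos : 0 < a := Nat.pos_of_mem_divisors ha
      have hapos' : 0 < a' := Nat.pos_of_mem_divisors ha'
      have hdpos : 0 < n / a :=
        Nat.div_pos (Nat.le_of_dvd hn (Nat.mem_divisors.1 ha).1) hapos
      have hdpos' : 0 < n / a' :=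
        Nat.div_pos (Nat.le_of_dvd hn (Nat.mem_divisors.1 ha').1) hapos'
      obtain ⟨h1, h2, h3⟩ := Hsub_inj hapos hapos' hdpos hdpos'
        (by positivity) (by exact_mod_cast c.isLt) (by positivity) (by exact_mod_cast c'.isLt) h
      subst h1
      have : c = c' := Fin.ext (by exact_mod_cast h3)
      subst this
      rfl
    · rintro ⟨H, hH⟩
      obtain ⟨a, d, b, hapos, hdpos, hb0, hb, hmul, hHeq⟩ := Hsub_classify hn H hH
      have ha : a ∈ n.divisors := Nat.mem_divisors.2 ⟨Dvd.intro d hmul, hn.ne'⟩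
      have hdna : n / a = d := by rw [← hmul, Nat.mul_div_cancel_left d hapos]
      have hblt : b.toNat < n / a := by rw [hdna]; omega
      refine ⟨⟨⟨a, ha⟩, ⟨b.toNat, hblt⟩⟩, ?_⟩
      apply Subtype.ext
      show Hsub a ((b.toNat : ℤ)) ((n / a : ℕ) : ℤ) = H
      rw [hHeq, Int.toNat_of_nonneg hb0, hdna]
  rw [← Nat.card_eq_of_bijective F hbij, Nat.card_eq_fintype_card, Fintype.card_sigma]
  simp only [Fintype.card_fin]
  rw [Finset.sum_coe_sort n.divisors (fun a => n / a), sigma_one_apply]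
  exact Nat.sum_div_divisors n _root_.id
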